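/- For every CNF formula F with n variables and m non-tautological clauses and every integer s ≥ 1: RREF(F,s) is satisfiable if and only if F has a Resolution refutation of length at most s. -/

import Mathlib

/-! ## Clauses, CNFs and Resolution -/

/-- A clause over variables of type `α`: a finite set of literals `(x, b)`,
where `(x, true)` is the positive literal `X` and `(x, false)` is `¬X`. -/
abbrev Clause (α : Type) := Finset (α × Bool)

/-- A clause is non-tautological if it contains no variable together with its negation. -/
def Clause.Nontaut {α : Type} (C : Clause α) : Prop :=
  ∀ x : α, ¬((x, true) ∈ C ∧ (x, false) ∈ C)

/-- A Resolution refutation of the set of clauses `F`: a nonempty sequence of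
non-tautological clauses, each of which is a weakening (i.e. a superset) of a clause
of `F`, or a weakening of a resolvent `(D_v ∖ {X}) ∪ (D_w ∖ {¬X})` of two earlier
clauses `D_v, D_w` with `X ∈ D_v` and `¬X ∈ D_w`; the last clause is empty.
The length of the refutation is the length of the list. -/
def IsResRefutation {α : Type} [DecidableEq α] (F : Set (Clause α)) (P : List (Clause α)) : Prop :=
  P ≠ [] ∧
  (∀ u : Fin P.length,
      Clause.Nontaut (P.get u) ∧
      ((∃ C ∈ F, C ⊆ P.get u) ∨
        ∃ v w : Fin P.length, (v : ℕ) < (u : ℕ) ∧ (w : ℕ) < (u : ℕ) ∧ ∃ x : α,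
          (x, true) ∈ P.get v ∧ (x, false) ∈ P.get w ∧
          ((P.get v).erase (x, true) ∪ (P.get w).erase (x, false)) ⊆ P.get u)) ∧
  P.getLast? = some (∅ : Clause α)

/-- Satisfiability of a set of clauses. -/
def CnfSat {α : Type} (S : Set (Clause α)) : Prop :=
  ∃ a : α → Bool, ∀ C ∈ S, ∃ l ∈ C, a l.1 = l.2

/-- The size of a CNF: the sum of the sizes (numbers of literals) of its clauses. -/
noncomputable def cnfSize {α : Type} (S : Set (Clause α)) : ℕ :=
  ∑ᶠ C ∈ S, Finset.card C

/-! ## Restrictions (partial assignments) -/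

/-- The restriction (partial assignment) `ρ` satisfies the clause `C` (i.e. `C↾ρ = 1`). -/
def Clause.SatByR {α : Type} (ρ : α → Option Bool) (C : Clause α) : Prop :=
  ∃ l ∈ C, ρ l.1 = some l.2

/-- The restriction `ρ` falsifies the clause `C` (i.e. `C↾ρ = 0`). -/
def Clause.FalsByR {α : Type} (ρ : α → Option Bool) (C : Clause α) : Prop :=
  ∀ l ∈ C, ρ l.1 = some (!l.2)

/-- The clause `C↾ρ` (relevant when `C` is neither satisfied nor falsified):
remove from `C` all falsified literals. -/
def Clause.restrictBy {α : Type} [DecidableEq α] (ρ : α → Option Bool) (C : Clause α) :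
    Clause α :=
  C.filter (fun l => ρ l.1 ≠ some (!l.2))

/-- `F↾ρ` for a set of clauses `F`: it contains `C↾ρ` for those `C ∈ F` neither satisfied
nor falsified by `ρ`, together with the empty clause if some `C ∈ F` is falsified by `ρ`. -/
def cnfRestrict {α : Type} [DecidableEq α] (ρ : α → Option Bool) (S : Set (Clause α)) :
    Set (Clause α) :=
  { E | ∃ C ∈ S, ¬Clause.SatByR ρ C ∧ ¬Clause.FalsByR ρ C ∧ E = Clause.restrictBy ρ C } ∪
  { E | E = (∅ : Clause α) ∧ ∃ C ∈ S, Clause.FalsByR ρ C }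

open scoped Classical in
/-- `Π↾ρ` for a sequence of clauses: remove the satisfied clauses (the `1`s) and replace
the falsified ones (the `0`s) by the empty clause. -/
noncomputable def seqRestrict {α : Type} [DecidableEq α] (ρ : α → Option Bool)
    (P : List (Clause α)) : List (Clause α) :=
  (P.filter (fun C => decide (¬Clause.SatByR ρ C))).map
    (fun C => if Clause.FalsByR ρ C then (∅ : Clause α) else Clause.restrictBy ρ C)

/-- The partial assignment `σ` extends the partial assignment `ρ`. -/
def optExtends {α : Type} (ρ σ : α → Option Bool) : Prop :=
  ∀ x b, ρ x = some b → σ x = some b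

/-! ## CNFs with an explicit enumeration of clauses -/

/-- A CNF formula with variables `X_1, …, X_n` (indices in `Finset.Icc 1 n`) given with an
explicit enumeration `Cl 1, …, Cl m` of its clauses. -/
structure CNFFam where
  n : ℕ
  m : ℕ
  Cl : ℕ → Clause ℕ

namespace CNFFam

/-- Well-formedness: the clauses `C_1, …, C_m` are non-tautological, pairwise distinct
(they enumerate a set of clauses), and use only the variables `X_1, …, X_n`. -/
def WF (F : CNFFam) : Prop :=
  (∀ j ∈ Finset.Icc 1 F.m, Clause.Nontaut (F.Cl j) ∧ ∀ l ∈ F.Cl j, l.1 ∈ Finset.Icc 1 F.n) ∧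
  (∀ j ∈ Finset.Icc 1 F.m, ∀ j' ∈ Finset.Icc 1 F.m, F.Cl j = F.Cl j' → j = j')

/-- The underlying set of clauses. -/
def clauseSet (F : CNFFam) : Set (Clause ℕ) :=
  { C | ∃ j ∈ Finset.Icc 1 F.m, C = F.Cl j }

/-- `F` is satisfiable. -/
def Sat (F : CNFFam) : Prop := CnfSat F.clauseSet

/-- `F` is a 3-CNF: all clauses have size at most 3. -/
def Is3CNF (F : CNFFam) : Prop := ∀ j ∈ Finset.Icc 1 F.m, (F.Cl j).card ≤ 3

end CNFFam

/-! ## The variables of the formulas REF and RREF -/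

/-- The propositional variables of `REF(F,s)` and `RREF(F,s)`. -/
inductive RefVar : Type where
  | D (u i : ℕ) (b : Bool)
  | V (u i : ℕ)
  | I (u j : ℕ)
  | L (u v : ℕ)
  | R (u v : ℕ)
  | P (u : ℕ)
deriving DecidableEq

abbrev VClause := Clause RefVar

/-- The index mentioned by a variable: `D[u,i,b], V[u,i], I[u,j], L[u,v], R[u,v], P[u]`
all mention the index `u`. -/
def RefVar.idx : RefVar → ℕ
  | .D u _ _ => u
  | .V u _ => u
  | .I u _ => u
  | .L u _ => u
  | .R u _ => u
  | .P u => u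

/-- The positive literal on a variable. -/
def pLit (x : RefVar) : RefVar × Bool := (x, true)

/-- The negative literal on a variable. -/
def nLit (x : RefVar) : RefVar × Bool := (x, false)

/-- The index-width of a clause: the number of indices mentioned by its variables. -/
def idxWidth (C : VClause) : ℕ := (C.image (fun l => RefVar.idx l.1)).card

/-! ## The clauses of REF and RREF -/

namespace Ref

/-- (A1) `V[u,0] ∨ V[u,1] ∨ ⋯ ∨ V[u,n]`. -/
def A1 (F : CNFFam) (A : Finset ℕ) : Set VClause :=
  { C | ∃ u ∈ A, C = (Finset.range (F.n + 1)).image (fun i => pLit (.V u i)) }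

/-- (A2) `I[u,0] ∨ I[u,1] ∨ ⋯ ∨ I[u,m]`. -/
def A2 (F : CNFFam) (A : Finset ℕ) : Set VClause :=
  { C | ∃ u ∈ A, C = (Finset.range (F.m + 1)).image (fun j => pLit (.I u j)) }

/-- (A3) `L[u,0] ∨ L[u,1] ∨ ⋯ ∨ L[u,s]` (disjunction over the index set and 0). -/
def A3 (A : Finset ℕ) : Set VClause :=
  { C | ∃ u ∈ A, C = (insert 0 A).image (fun v => pLit (.L u v)) }

/-- (A4) `R[u,0] ∨ R[u,1] ∨ ⋯ ∨ R[u,s]`. -/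
def A4 (A : Finset ℕ) : Set VClause :=
  { C | ∃ u ∈ A, C = (insert 0 A).image (fun v => pLit (.R u v)) }

/-- (A5) `¬V[u,i] ∨ ¬V[u,i']`, `i ≠ i'`. -/
def A5 (F : CNFFam) (A : Finset ℕ) : Set VClause :=
  { C | ∃ u ∈ A, ∃ i ∈ Finset.range (F.n + 1), ∃ i' ∈ Finset.range (F.n + 1),
      i ≠ i' ∧ C = {nLit (.V u i), nLit (.V u i')} }

/-- (A6) `¬I[u,j] ∨ ¬I[u,j']`, `j ≠ j'`. -/
def A6 (F : CNFFam) (A : Finset ℕ) : Set VClause :=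
  { C | ∃ u ∈ A, ∃ j ∈ Finset.range (F.m + 1), ∃ j' ∈ Finset.range (F.m + 1),
      j ≠ j' ∧ C = {nLit (.I u j), nLit (.I u j')} }

/-- (A7) `¬L[u,v] ∨ ¬L[u,v']`, `v ≠ v'`. -/
def A7 (A : Finset ℕ) : Set VClause :=
  { C | ∃ u ∈ A, ∃ v ∈ insert 0 A, ∃ v' ∈ insert 0 A,
      v ≠ v' ∧ C = {nLit (.L u v), nLit (.L u v')} }

/-- (A8) `¬R[u,v] ∨ ¬R[u,v']`, `v ≠ v'`. -/
def A8 (A : Finset ℕ) : Set VClause :=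
  { C | ∃ u ∈ A, ∃ v ∈ insert 0 A, ∃ v' ∈ insert 0 A,
      v ≠ v' ∧ C = {nLit (.R u v), nLit (.R u v')} }

/-- (A9) `¬I[u,0] ∨ ¬V[u,0]`. -/
def A9 (A : Finset ℕ) : Set VClause := { C | ∃ u ∈ A, C = {nLit (.I u 0), nLit (.V u 0)} }

/-- (A10) `I[u,0] ∨ V[u,0]`. -/
def A10 (A : Finset ℕ) : Set VClause := { C | ∃ u ∈ A, C = {pLit (.I u 0), pLit (.V u 0)} }

/-- (A11) `¬I[u,0] ∨ ¬L[u,0]`. -/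
def A11 (A : Finset ℕ) : Set VClause := { C | ∃ u ∈ A, C = {nLit (.I u 0), nLit (.L u 0)} }

/-- (A12) `¬I[u,0] ∨ ¬R[u,0]`. -/
def A12 (A : Finset ℕ) : Set VClause := { C | ∃ u ∈ A, C = {nLit (.I u 0), nLit (.R u 0)} }

/-- (A13) `¬L[u,v]` for `u ≤ v`. -/
def A13 (A : Finset ℕ) : Set VClause :=
  { C | ∃ u ∈ A, ∃ v ∈ A, u ≤ v ∧ C = {nLit (.L u v)} }

/-- (A14) `¬R[u,v]` for `u ≤ v`. -/
def A14 (A : Finset ℕ) : Set VClause :=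
  { C | ∃ u ∈ A, ∃ v ∈ A, u ≤ v ∧ C = {nLit (.R u v)} }

/-- (A15) `¬L[u,v] ∨ ¬V[u,i] ∨ D[v,i,0]`. -/
def A15 (F : CNFFam) (A : Finset ℕ) : Set VClause :=
  { C | ∃ u ∈ A, ∃ v ∈ A, ∃ i ∈ Finset.Icc 1 F.n,
      C = {nLit (.L u v), nLit (.V u i), pLit (.D v i false)} }

/-- (A16) `¬R[u,v] ∨ ¬V[u,i] ∨ D[v,i,1]`. -/
def A16 (F : CNFFam) (A : Finset ℕ) : Set VClause :=
  { C | ∃ u ∈ A, ∃ v ∈ A, ∃ i ∈ Finset.Icc 1 F.n,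
      C = {nLit (.R u v), nLit (.V u i), pLit (.D v i true)} }

/-- (A17) `¬L[u,v] ∨ ¬V[u,i] ∨ ¬D[v,i',b] ∨ D[u,i',b]`, `i' ≠ i`. -/
def A17 (F : CNFFam) (A : Finset ℕ) : Set VClause :=
  { C | ∃ u ∈ A, ∃ v ∈ A, ∃ i ∈ Finset.Icc 1 F.n, ∃ i' ∈ Finset.Icc 1 F.n, ∃ b : Bool,
      i' ≠ i ∧ C = {nLit (.L u v), nLit (.V u i), nLit (.D v i' b), pLit (.D u i' b)} }

/-- (A18) `¬R[u,v] ∨ ¬V[u,i] ∨ ¬D[v,i',b] ∨ D[u,i',b]`, `i' ≠ i`. -/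
def A18 (F : CNFFam) (A : Finset ℕ) : Set VClause :=
  { C | ∃ u ∈ A, ∃ v ∈ A, ∃ i ∈ Finset.Icc 1 F.n, ∃ i' ∈ Finset.Icc 1 F.n, ∃ b : Bool,
      i' ≠ i ∧ C = {nLit (.R u v), nLit (.V u i), nLit (.D v i' b), pLit (.D u i' b)} }

/-- (A19) `¬I[u,j] ∨ D[u,i,b]` for `X_i^{(b)} ∈ C_j`. -/
def A19 (F : CNFFam) (A : Finset ℕ) : Set VClause :=
  { C | ∃ u ∈ A, ∃ j ∈ Finset.Icc 1 F.m, ∃ i : ℕ, ∃ b : Bool,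
      (i, b) ∈ F.Cl j ∧ C = {nLit (.I u j), pLit (.D u i b)} }

/-- (A20) `¬D[u,i,0] ∨ ¬D[u,i,1]`. -/
def A20 (F : CNFFam) (A : Finset ℕ) : Set VClause :=
  { C | ∃ u ∈ A, ∃ i ∈ Finset.Icc 1 F.n, C = {nLit (.D u i false), nLit (.D u i true)} }

/-- (A21) `¬D[s,i,b]` (for the last index `t`). -/
def A21 (F : CNFFam) (t : ℕ) : Set VClause :=
  { C | ∃ i ∈ Finset.Icc 1 F.n, ∃ b : Bool, C = {nLit (.D t i b)} }

/-- (A22) `¬P[u] ∨ ¬L[u,v] ∨ P[v]`. -/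
def A22 (A : Finset ℕ) : Set VClause :=
  { C | ∃ u ∈ A, ∃ v ∈ A, C = {nLit (.P u), nLit (.L u v), pLit (.P v)} }

/-- (A23) `¬P[u] ∨ ¬R[u,v] ∨ P[v]`. -/
def A23 (A : Finset ℕ) : Set VClause :=
  { C | ∃ u ∈ A, ∃ v ∈ A, C = {nLit (.P u), nLit (.R u v), pLit (.P v)} }

/-- (A24) `P[s]` (for the last index `t`). -/
def A24 (t : ℕ) : Set VClause := { C | C = {pLit (.P t)} }

end Ref

/-- The formula `REF(F, A)` with index set `A` (in place of `[s]`) and last index `t`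
(in the role of `s`): the clauses (A1)–(A21). -/
def REFA (F : CNFFam) (A : Finset ℕ) (t : ℕ) : Set VClause :=
  Ref.A1 F A ∪ Ref.A2 F A ∪ Ref.A3 A ∪ Ref.A4 A ∪ Ref.A5 F A ∪ Ref.A6 F A ∪
    Ref.A7 A ∪ Ref.A8 A ∪ Ref.A9 A ∪ Ref.A10 A ∪ Ref.A11 A ∪ Ref.A12 A ∪ Ref.A13 A ∪
    Ref.A14 A ∪ Ref.A15 F A ∪ Ref.A16 F A ∪ Ref.A17 F A ∪ Ref.A18 F A ∪ Ref.A19 F A ∪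
    Ref.A20 F A ∪ Ref.A21 F t

/-- The formula `REF(F, s)`. -/
def REF (F : CNFFam) (s : ℕ) : Set VClause := REFA F (Finset.Icc 1 s) s

/-- Relativization of a clause: add the literal `¬P[u]` for every index `u` mentioned
by a variable occurring in the clause. -/
def relCl (C : VClause) : VClause :=
  C ∪ (C.image (fun l => RefVar.idx l.1)).image (fun u => nLit (.P u))

/-- The formula `RREF(F, s)`: the relativized clauses of `REF(F,s)` together with the
clauses (A22), (A23) and (A24). -/
def RREF (F : CNFFam) (s : ℕ) : Set VClause :=
  (relCl '' REF F s) ∪ Ref.A22 (Finset.Icc 1 s) ∪ Ref.A23 (Finset.Icc 1 s) ∪ Ref.A24 s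

/-- `REF(F,s)` with the clauses of types (A7) and (A8) deleted. -/
def REFnoLR (F : CNFFam) (s : ℕ) : Set VClause :=
  Ref.A1 F (Finset.Icc 1 s) ∪ Ref.A2 F (Finset.Icc 1 s) ∪ Ref.A3 (Finset.Icc 1 s) ∪
    Ref.A4 (Finset.Icc 1 s) ∪ Ref.A5 F (Finset.Icc 1 s) ∪ Ref.A6 F (Finset.Icc 1 s) ∪
    Ref.A9 (Finset.Icc 1 s) ∪ Ref.A10 (Finset.Icc 1 s) ∪ Ref.A11 (Finset.Icc 1 s) ∪
    Ref.A12 (Finset.Icc 1 s) ∪ Ref.A13 (Finset.Icc 1 s) ∪ Ref.A14 (Finset.Icc 1 s) ∪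
    Ref.A15 F (Finset.Icc 1 s) ∪ Ref.A16 F (Finset.Icc 1 s) ∪ Ref.A17 F (Finset.Icc 1 s) ∪
    Ref.A18 F (Finset.Icc 1 s) ∪ Ref.A19 F (Finset.Icc 1 s) ∪ Ref.A20 F (Finset.Icc 1 s) ∪
    Ref.A21 F s

/-- `RREF'(F,s)`: obtained from `RREF(F,s)` by deleting the (relativized) clauses of
types (A7) and (A8). -/
def RREF' (F : CNFFam) (s : ℕ) : Set VClause :=
  (relCl '' REFnoLR F s) ∪ Ref.A22 (Finset.Icc 1 s) ∪ Ref.A23 (Finset.Icc 1 s) ∪ Ref.A24 s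

/-! ## Refutations as structures -/

/-- A structure `(D, V, I, L, R)` of the type of a length-`s` refutation. -/
structure RefStruct where
  Dr : ℕ → ℕ → Bool → Bool
  Vf : ℕ → ℕ
  If' : ℕ → ℕ
  Lf : ℕ → ℕ
  Rf : ℕ → ℕ

namespace RefStruct

/-- The typing conditions: `D ⊆ [s]×[n]×B`, `V : [s] → [n]∪{0}`, `I : [s] → [m]∪{0}`,
`L, R : [s] → [s]∪{0}`. -/
def WFOn (M : RefStruct) (s n m : ℕ) : Prop :=
  (∀ u i b, M.Dr u i b = true → u ∈ Finset.Icc 1 s ∧ i ∈ Finset.Icc 1 n) ∧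
  (∀ u ∈ Finset.Icc 1 s, M.Vf u ≤ n) ∧
  (∀ u ∈ Finset.Icc 1 s, M.If' u ≤ m) ∧
  (∀ u ∈ Finset.Icc 1 s, M.Lf u ≤ s) ∧
  (∀ u ∈ Finset.Icc 1 s, M.Rf u ≤ s)

/-- (R1)–(R8): the structure is a refutation of `F` of length `s`. -/
def IsRefutationOf (M : RefStruct) (F : CNFFam) (s : ℕ) : Prop :=
  ∀ u ∈ Finset.Icc 1 s,
    ((M.Vf u = 0 ∨ M.If' u = 0) ∧ ¬(M.Vf u = 0 ∧ M.If' u = 0)) ∧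
    (M.If' u = 0 → M.Lf u ≠ 0 ∧ M.Rf u ≠ 0) ∧
    (M.Lf u < u ∧ M.Rf u < u) ∧
    (∀ i ∈ Finset.Icc 1 F.n, ∀ v ∈ Finset.Icc 1 s,
      (M.Vf u = i → M.Lf u = v → M.Dr v i false = true) ∧
      (M.Vf u = i → M.Rf u = v → M.Dr v i true = true) ∧
      (∀ i' ∈ Finset.Icc 1 F.n, ∀ b : Bool,
        M.Vf u = i → i ≠ i' → M.Lf u = v → M.Dr v i' b = true → M.Dr u i' b = true) ∧
      (∀ i' ∈ Finset.Icc 1 F.n, ∀ b : Bool,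
        M.Vf u = i → i ≠ i' → M.Rf u = v → M.Dr v i' b = true → M.Dr u i' b = true)) ∧
    (∀ j ∈ Finset.Icc 1 F.m, ∀ i : ℕ, ∀ b : Bool,
      M.If' u = j → (i, b) ∈ F.Cl j → M.Dr u i b = true) ∧
    (∀ i ∈ Finset.Icc 1 F.n, ¬(M.Dr u i false = true ∧ M.Dr u i true = true)) ∧
    (∀ i ∈ Finset.Icc 1 F.n, ∀ b : Bool, M.Dr s i b = false)

/-- The truth assignment associated to a structure. -/
def assign (M : RefStruct) : RefVar → Bool
  | .D u i b => M.Dr u i b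
  | .V u i => M.Vf u == i
  | .I u j => M.If' u == j
  | .L u v => M.Lf u == v
  | .R u v => M.Rf u == v
  | .P _ => true

end RefStruct

/-! ## The full-tree refutation -/

/-- The level `h` of the node numbered `u` in the full binary tree with `n+1` levels. -/
def levelOf (n u : ℕ) : ℕ := Nat.log 2 (2 ^ (n + 1) - u)

/-- The value (position within its level, `a₁` most significant) of the node numbered `u`. -/
def valOf (n u : ℕ) : ℕ := u - (2 ^ (n + 1) + 1 - 2 ^ (levelOf n u + 1))

/-- The `i`-th bit `a_i` of the binary string `a` labelling the node numbered `u`. -/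
def digitOf (n u i : ℕ) : Bool := (valOf n u).testBit (levelOf n u - i)

/-- The clause `C_a = X_1^{(a_1)} ∨ ⋯ ∨ X_n^{(a_n)}` labelling the leaf numbered `u`. -/
def leafClause (F : CNFFam) (u : ℕ) : Clause ℕ :=
  (Finset.Icc 1 F.n).image (fun i => (i, digitOf F.n u i))

/-- The full-tree Resolution refutation `(D*, V*, I*, L*, R*)` of `F`,
of length `s* = 2^{n+1} - 1`. -/
noncomputable def fullTree (F : CNFFam) : RefStruct where
  Dr := fun u i b =>
    decide (1 ≤ u ∧ u ≤ 2 ^ (F.n + 1) - 1 ∧ 1 ≤ i ∧ i ≤ levelOf F.n u) &&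
      (digitOf F.n u i == b)
  Vf := fun u =>
    if 1 ≤ u ∧ u ≤ 2 ^ (F.n + 1) - 1 ∧ levelOf F.n u < F.n then levelOf F.n u + 1 else 0
  If' := fun u =>
    if 1 ≤ u ∧ u ≤ 2 ^ (F.n + 1) - 1 ∧ levelOf F.n u = F.n then
      sInf { j : ℕ | j ∈ Finset.Icc 1 F.m ∧ F.Cl j ⊆ leafClause F u }
    else 0
  Lf := fun u =>
    if 1 ≤ u ∧ u ≤ 2 ^ (F.n + 1) - 1 ∧ levelOf F.n u < F.n then
      2 ^ (F.n + 1) + 1 + 2 * valOf F.n u - 2 ^ (levelOf F.n u + 2)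
    else 0
  Rf := fun u =>
    if 1 ≤ u ∧ u ≤ 2 ^ (F.n + 1) - 1 ∧ levelOf F.n u < F.n then
      2 ^ (F.n + 1) + 2 + 2 * valOf F.n u - 2 ^ (levelOf F.n u + 2)
    else 0

/-! ## Blocks, the family 𝓗, and conditions -/

/-- The integer `k` with `2^k < 3w ≤ 2^{k+1}`. -/
def kOf (w : ℕ) : ℕ := Nat.log 2 (3 * w - 1)

/-- The block `B*_i` of `[s*]`, `s* = 2^{n+1} - 1`. -/
def Bstar (n w i : ℕ) : Finset ℕ :=
  let s' := 2 ^ (n + 1) - 1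
  let k := kOf w
  if i = 0 then Finset.Icc (s' - 2 ^ (k + 1) + 2) s'
  else Finset.Icc (s' + 2 - 2 ^ (k + 1 + i)) (s' - 2 ^ (k + i) + 1)

/-- The block `B_i` of `[s]`. -/
def Bblk (n s w i : ℕ) : Finset ℕ :=
  let k := kOf w
  if i = 0 then Finset.Icc (s - 2 ^ (k + 1) + 2) s
  else if i = n - k then Finset.Icc 1 (s - 2 ^ (k + 1) * (n - k) + 1)
  else Finset.Icc (s - 2 ^ (k + 1) * (i + 1) + 2) (s - 2 ^ (k + 1) * i + 1)

/-- The bijection `t : B_0 → B*_0`, `t(u) = u - s + s*`. -/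
def tmap (n s u : ℕ) : ℕ := u + (2 ^ (n + 1) - 1 - s)

/-- `h` (a set of pairs) is a partial function. -/
def pfun (h : Finset (ℕ × ℕ)) : Prop :=
  ∀ p ∈ h, ∀ q ∈ h, p.1 = q.1 → p.2 = q.2

/-- The domain of a partial function given as a set of pairs. -/
def pdom (h : Finset (ℕ × ℕ)) : Finset ℕ := h.image Prod.fst

/-- The image of a partial function given as a set of pairs. -/
def pimg (h : Finset (ℕ × ℕ)) : Finset ℕ := h.image Prod.snd

/-- Membership in the family `𝓗`: injective partial functions
`h : [s]∪{0} → [s*]∪{0}` satisfying (H1)–(H4). -/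
def memH (n s w : ℕ) (h : Finset (ℕ × ℕ)) : Prop :=
  pfun h ∧
  (∀ p ∈ h, p.1 ∈ insert 0 (Finset.Icc 1 s) ∧
    p.2 ∈ insert 0 (Finset.Icc 1 (2 ^ (n + 1) - 1))) ∧
  (∀ p ∈ h, ∀ q ∈ h, p.2 = q.2 → p.1 = q.1) ∧
  ((0, 0) ∈ h) ∧
  (∀ p ∈ h, p.1 ∈ Bblk n s w 0 → p.2 = tmap n s p.1) ∧
  (∀ p ∈ h, ∀ i ∈ Finset.Icc 1 (n - kOf w), p.1 ∈ Bblk n s w i → p.2 ∈ Bstar n w i)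

/-- `∂I = {L*(u) | u ∈ I∖{0}} ∪ {R*(u) | u ∈ I∖{0}}`. -/
noncomputable def bnd (F : CNFFam) (I : Finset ℕ) : Finset ℕ :=
  (I.erase 0).image (fullTree F).Lf ∪ (I.erase 0).image (fullTree F).Rf

/-- A condition: a pair `p = (g, h)` of members of `𝓗` with (C1) `g ⊆ h` and
(C2) `Img(h) = Img(g) ∪ ∂Img(g)`. -/
def IsCond (F : CNFFam) (s w : ℕ) (g h : Finset (ℕ × ℕ)) : Prop :=
  memH F.n s w g ∧ memH F.n s w h ∧ g ⊆ h ∧ pimg h = pimg g ∪ bnd F (pimg g)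

/-- Application of a partial function given as a set of pairs. -/
noncomputable def papp (g : Finset (ℕ × ℕ)) (u : ℕ) : ℕ := sInf { v : ℕ | (u, v) ∈ g }

/-- Inverse application of an (injective) partial function given as a set of pairs. -/
noncomputable def pinv (h : Finset (ℕ × ℕ)) (y : ℕ) : ℕ := sInf { u : ℕ | (u, y) ∈ h }

/-- The partial assignment `α(p)` determined by a condition `p = (g, h)`: it is defined
precisely on the variables (of `REF(F,s)`) mentioning some `u ∈ Dom(g) ∖ {0}`, where it is
read off from the full-tree refutation through `g` (and `h` for the `L`- and `R`-variables). -/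
noncomputable def alphaP (F : CNFFam) (g h : Finset (ℕ × ℕ)) : RefVar → Option Bool :=
  fun x =>
    if RefVar.idx x ∈ (pdom g).erase 0 then
      match x with
      | RefVar.D u i b => some ((fullTree F).assign (RefVar.D (papp g u) i b))
      | RefVar.V u i => some ((fullTree F).assign (RefVar.V (papp g u) i))
      | RefVar.I u j => some ((fullTree F).assign (RefVar.I (papp g u) j))
      | RefVar.L u v => some (decide (v = pinv h ((fullTree F).Lf (papp g u))))
      | RefVar.R u v => some (decide (v = pinv h ((fullTree F).Rf (papp g u))))
      | RefVar.P _ => none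
    else none

open scoped Classical in
/-- The restriction `p↾I` of a condition `p = (g,h)`: `g'` is the restriction of `g` to
`I ∪ {0}` and `h'` is the restriction of `h` with image `Img(g') ∪ ∂Img(g')`. -/
noncomputable def condRestrict (F : CNFFam) (g h : Finset (ℕ × ℕ)) (I : Finset ℕ) :
    Finset (ℕ × ℕ) × Finset (ℕ × ℕ) :=
  let g' := g.filter (fun p => p.1 ∈ insert 0 I)
  let h' := h.filter (fun p => p.2 ∈ pimg g' ∪ bnd F (pimg g'))
  (g', h')

/-! ## Auxiliary material for Statement 13 -/

namespace Aux13

open Finset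

variable {F : CNFFam} {s : ℕ}

lemma mem_RREF_rel {C : VClause} (h : C ∈ REF F s) : relCl C ∈ RREF F s :=
  Or.inl (Or.inl (Or.inl ⟨C, h, rfl⟩))

lemma mA1 {C} (h : C ∈ Ref.A1 F (Finset.Icc 1 s)) : C ∈ REF F s := Or.inl (Or.inl (Or.inl (Or.inl (Or.inl (Or.inl (Or.inl (Or.inl (Or.inl (Or.inl (Or.inl (Or.inl (Or.inl (Or.inl (Or.inl (Or.inl (Or.inl (Or.inl (Or.inl (Or.inl (h))))))))))))))))))))
lemma mA2 {C} (h : C ∈ Ref.A2 F (Finset.Icc 1 s)) : C ∈ REF F s := Or.inl (Or.inl (Or.inl (Or.inl (Or.inl (Or.inl (Or.inl (Or.inl (Or.inl (Or.inl (Or.inl (Or.inl (Or.inl (Or.inl (Or.inl (Or.inl (Or.inl (Or.inl (Or.inl (Or.inr h)))))))))))))))))))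
lemma mA3 {C} (h : C ∈ Ref.A3 (Finset.Icc 1 s)) : C ∈ REF F s := Or.inl (Or.inl (Or.inl (Or.inl (Or.inl (Or.inl (Or.inl (Or.inl (Or.inl (Or.inl (Or.inl (Or.inl (Or.inl (Or.inl (Or.inl (Or.inl (Or.inl (Or.inl (Or.inr h))))))))))))))))))
lemma mA4 {C} (h : C ∈ Ref.A4 (Finset.Icc 1 s)) : C ∈ REF F s := Or.inl (Or.inl (Or.inl (Or.inl (Or.inl (Or.inl (Or.inl (Or.inl (Or.inl (Or.inl (Or.inl (Or.inl (Or.inl (Or.inl (Or.inl (Or.inl (Or.inl (Or.inr h)))))))))))))))))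
lemma mA5 {C} (h : C ∈ Ref.A5 F (Finset.Icc 1 s)) : C ∈ REF F s := Or.inl (Or.inl (Or.inl (Or.inl (Or.inl (Or.inl (Or.inl (Or.inl (Or.inl (Or.inl (Or.inl (Or.inl (Or.inl (Or.inl (Or.inl (Or.inl (Or.inr h))))))))))))))))
lemma mA6 {C} (h : C ∈ Ref.A6 F (Finset.Icc 1 s)) : C ∈ REF F s := Or.inl (Or.inl (Or.inl (Or.inl (Or.inl (Or.inl (Or.inl (Or.inl (Or.inl (Or.inl (Or.inl (Or.inl (Or.inl (Or.inl (Or.inl (Or.inr h)))))))))))))))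
lemma mA7 {C} (h : C ∈ Ref.A7 (Finset.Icc 1 s)) : C ∈ REF F s := Or.inl (Or.inl (Or.inl (Or.inl (Or.inl (Or.inl (Or.inl (Or.inl (Or.inl (Or.inl (Or.inl (Or.inl (Or.inl (Or.inl (Or.inr h))))))))))))))
lemma mA8 {C} (h : C ∈ Ref.A8 (Finset.Icc 1 s)) : C ∈ REF F s := Or.inl (Or.inl (Or.inl (Or.inl (Or.inl (Or.inl (Or.inl (Or.inl (Or.inl (Or.inl (Or.inl (Or.inl (Or.inl (Or.inr h)))))))))))))
lemma mA9 {C} (h : C ∈ Ref.A9 (Finset.Icc 1 s)) : C ∈ REF F s := Or.inl (Or.inl (Or.inl (Or.inl (Or.inl (Or.inl (Or.inl (Or.inl (Or.inl (Or.inl (Or.inl (Or.inl (Or.inr h))))))))))))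
lemma mA10 {C} (h : C ∈ Ref.A10 (Finset.Icc 1 s)) : C ∈ REF F s := Or.inl (Or.inl (Or.inl (Or.inl (Or.inl (Or.inl (Or.inl (Or.inl (Or.inl (Or.inl (Or.inl (Or.inr h)))))))))))
lemma mA11 {C} (h : C ∈ Ref.A11 (Finset.Icc 1 s)) : C ∈ REF F s := Or.inl (Or.inl (Or.inl (Or.inl (Or.inl (Or.inl (Or.inl (Or.inl (Or.inl (Or.inl (Or.inr h))))))))))
lemma mA12 {C} (h : C ∈ Ref.A12 (Finset.Icc 1 s)) : C ∈ REF F s := Or.inl (Or.inl (Or.inl (Or.inl (Or.inl (Or.inl (Or.inl (Or.inl (Or.inl (Or.inr h)))))))))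
lemma mA13 {C} (h : C ∈ Ref.A13 (Finset.Icc 1 s)) : C ∈ REF F s := Or.inl (Or.inl (Or.inl (Or.inl (Or.inl (Or.inl (Or.inl (Or.inl (Or.inr h))))))))
lemma mA14 {C} (h : C ∈ Ref.A14 (Finset.Icc 1 s)) : C ∈ REF F s := Or.inl (Or.inl (Or.inl (Or.inl (Or.inl (Or.inl (Or.inl (Or.inr h)))))))
lemma mA15 {C} (h : C ∈ Ref.A15 F (Finset.Icc 1 s)) : C ∈ REF F s := Or.inl (Or.inl (Or.inl (Or.inl (Or.inl (Or.inl (Or.inr h))))))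
lemma mA16 {C} (h : C ∈ Ref.A16 F (Finset.Icc 1 s)) : C ∈ REF F s := Or.inl (Or.inl (Or.inl (Or.inl (Or.inl (Or.inr h)))))
lemma mA17 {C} (h : C ∈ Ref.A17 F (Finset.Icc 1 s)) : C ∈ REF F s := Or.inl (Or.inl (Or.inl (Or.inl (Or.inr h))))
lemma mA18 {C} (h : C ∈ Ref.A18 F (Finset.Icc 1 s)) : C ∈ REF F s := Or.inl (Or.inl (Or.inl (Or.inr h)))
lemma mA19 {C} (h : C ∈ Ref.A19 F (Finset.Icc 1 s)) : C ∈ REF F s := Or.inl (Or.inl (Or.inr h))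
lemma mA20 {C} (h : C ∈ Ref.A20 F (Finset.Icc 1 s)) : C ∈ REF F s := Or.inl (Or.inr h)
lemma mA21 {C} (h : C ∈ Ref.A21 F s) : C ∈ REF F s := Or.inr h

/-- Satisfying RREF satisfies every REF-clause all of whose mentioned indices have `P` true. -/
lemma sat_of_mem_REF {a : RefVar → Bool}
    (ha : ∀ C ∈ RREF F s, ∃ l ∈ C, a l.1 = l.2) {C : VClause} (hC : C ∈ REF F s)
    (hP : ∀ l ∈ C, a (.P (RefVar.idx l.1)) = true) : ∃ l ∈ C, a l.1 = l.2 := by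
  obtain ⟨l, hl, hal⟩ := ha _ (mem_RREF_rel hC)
  unfold relCl at hl
  rw [Finset.mem_union] at hl
  rcases hl with hl | hl
  · exact ⟨l, hl, hal⟩
  · exfalso
    simp only [Finset.mem_image] at hl
    obtain ⟨u, hu, rfl⟩ := hl
    obtain ⟨l', hl', rfl⟩ := hu
    have h2 := hP l' hl'
    simp only [nLit] at hal
    rw [h2] at hal
    simp at hal

end Aux13
namespace Aux13

open Finset

/-- The value function extracted from the `V`-variables. -/
noncomputable def Vv (a : RefVar → Bool) (u : ℕ) : ℕ := sInf {i | a (.V u i) = true}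
noncomputable def Iv (a : RefVar → Bool) (u : ℕ) : ℕ := sInf {j | a (.I u j) = true}
noncomputable def Lv (a : RefVar → Bool) (u : ℕ) : ℕ := sInf {v | a (.L u v) = true}
noncomputable def Rv (a : RefVar → Bool) (u : ℕ) : ℕ := sInf {v | a (.R u v) = true}

/-- The clause extracted from the `D`-variables. -/
def Dv (F : CNFFam) (a : RefVar → Bool) (u : ℕ) : Clause ℕ :=
  ((Finset.Icc 1 F.n) ×ˢ (Finset.univ : Finset Bool)).filter (fun l => a (.D u l.1 l.2) = true)

lemma mem_Dv {F : CNFFam} {a : RefVar → Bool} {u i : ℕ} {b : Bool} :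
    (i, b) ∈ Dv F a u ↔ (i ∈ Finset.Icc 1 F.n ∧ a (.D u i b) = true) := by
  simp [Dv]

lemma forward (F : CNFFam) (hWF : F.WF) (s : ℕ) (hs : 1 ≤ s) (a : RefVar → Bool)
    (ha : ∀ C ∈ RREF F s, ∃ l ∈ C, a l.1 = l.2) :
    ∃ Prf : List (Clause ℕ), IsResRefutation F.clauseSet Prf ∧ Prf.length ≤ s := by
  have hss : s ∈ Finset.Icc 1 s := by simp [hs]
  -- P[s] is true
  have hPs : a (.P s) = true := by
    have h24 : ({pLit (.P s)} : VClause) ∈ RREF F s := Or.inr rfl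
    obtain ⟨l, hl, hal⟩ := ha _ h24
    simp only [Finset.mem_singleton] at hl
    subst hl
    simpa [pLit] using hal
  -- facts about V
  have hVfact : ∀ u ∈ Finset.Icc 1 s, a (.P u) = true →
      Vv a u ≤ F.n ∧ a (.V u (Vv a u)) = true ∧
        (∀ i, i ≤ F.n → a (.V u i) = true → i = Vv a u) := by
    intro u hu hPu
    obtain ⟨l, hl, hal⟩ := sat_of_mem_REF ha (mA1 ⟨u, hu, rfl⟩) (by
      rintro l hl
      simp only [Finset.mem_image] at hl
      obtain ⟨i, -, rfl⟩ := hl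
      simpa [pLit, RefVar.idx] using hPu)
    simp only [Finset.mem_image, Finset.mem_range] at hl
    obtain ⟨i, hi, rfl⟩ := hl
    simp only [pLit] at hal
    have hne : {i | a (.V u i) = true}.Nonempty := ⟨i, hal⟩
    have hmem : a (.V u (Vv a u)) = true := Nat.sInf_mem hne
    have hle : Vv a u ≤ i := Nat.sInf_le hal
    refine ⟨le_trans hle (Nat.lt_succ_iff.mp hi), hmem, ?_⟩
    intro i' hi' hai'
    by_contra hneq
    obtain ⟨l, hl, hal2⟩ := sat_of_mem_REF ha
      (mA5 ⟨u, hu, i', by simpa [Nat.lt_succ_iff] using hi', Vv a u,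
        by simpa [Nat.lt_succ_iff] using le_trans hle (Nat.lt_succ_iff.mp hi), hneq, rfl⟩) (by
      rintro l hl
      simp only [Finset.mem_insert, Finset.mem_singleton] at hl
      rcases hl with rfl | rfl <;> simpa [nLit, RefVar.idx] using hPu)
    simp only [Finset.mem_insert, Finset.mem_singleton] at hl
    rcases hl with rfl | rfl
    · simp [nLit, hai'] at hal2
    · simp [nLit, hmem] at hal2
  -- facts about I
  have hIfact : ∀ u ∈ Finset.Icc 1 s, a (.P u) = true →
      Iv a u ≤ F.m ∧ a (.I u (Iv a u)) = true := by
    intro u hu hPu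
    obtain ⟨l, hl, hal⟩ := sat_of_mem_REF ha (mA2 ⟨u, hu, rfl⟩) (by
      rintro l hl
      simp only [Finset.mem_image] at hl
      obtain ⟨j, -, rfl⟩ := hl
      simpa [pLit, RefVar.idx] using hPu)
    simp only [Finset.mem_image, Finset.mem_range] at hl
    obtain ⟨j, hj, rfl⟩ := hl
    simp only [pLit] at hal
    have hne : {j | a (.I u j) = true}.Nonempty := ⟨j, hal⟩
    have hmem : a (.I u (Iv a u)) = true := Nat.sInf_mem hne
    exact ⟨le_trans (Nat.sInf_le hal) (Nat.lt_succ_iff.mp hj), hmem⟩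
  -- facts about L
  have hLfact : ∀ u ∈ Finset.Icc 1 s, a (.P u) = true →
      Lv a u ≤ s ∧ a (.L u (Lv a u)) = true := by
    intro u hu hPu
    obtain ⟨l, hl, hal⟩ := sat_of_mem_REF ha (mA3 ⟨u, hu, rfl⟩) (by
      rintro l hl
      simp only [Finset.mem_image] at hl
      obtain ⟨v, -, rfl⟩ := hl
      simpa [pLit, RefVar.idx] using hPu)
    simp only [Finset.mem_image, Finset.mem_insert, Finset.mem_Icc] at hl
    obtain ⟨v, hv, rfl⟩ := hl
    simp only [pLit] at hal
    have hne : {v | a (.L u v) = true}.Nonempty := ⟨v, hal⟩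
    have hmem : a (.L u (Lv a u)) = true := Nat.sInf_mem hne
    have hvs : v ≤ s := by omega
    exact ⟨le_trans (Nat.sInf_le hal) hvs, hmem⟩
  -- facts about R
  have hRfact : ∀ u ∈ Finset.Icc 1 s, a (.P u) = true →
      Rv a u ≤ s ∧ a (.R u (Rv a u)) = true := by
    intro u hu hPu
    obtain ⟨l, hl, hal⟩ := sat_of_mem_REF ha (mA4 ⟨u, hu, rfl⟩) (by
      rintro l hl
      simp only [Finset.mem_image] at hl
      obtain ⟨v, -, rfl⟩ := hl
      simpa [pLit, RefVar.idx] using hPu)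
    simp only [Finset.mem_image, Finset.mem_insert, Finset.mem_Icc] at hl
    obtain ⟨v, hv, rfl⟩ := hl
    simp only [pLit] at hal
    have hne : {v | a (.R u v) = true}.Nonempty := ⟨v, hal⟩
    have hmem : a (.R u (Rv a u)) = true := Nat.sInf_mem hne
    have hvs : v ≤ s := by omega
    exact ⟨le_trans (Nat.sInf_le hal) hvs, hmem⟩
  -- non-tautology
  have hnt : ∀ u ∈ Finset.Icc 1 s, a (.P u) = true → Clause.Nontaut (Dv F a u) := by
    intro u hu hPu x hx
    rw [mem_Dv, mem_Dv] at hx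
    obtain ⟨⟨hx1, ht⟩, ⟨-, hf⟩⟩ := hx
    obtain ⟨l, hl, hal⟩ := sat_of_mem_REF ha (mA20 ⟨u, hu, x, hx1, rfl⟩) (by
      rintro l hl
      simp only [Finset.mem_insert, Finset.mem_singleton] at hl
      rcases hl with rfl | rfl <;> simpa [nLit, RefVar.idx] using hPu)
    simp only [Finset.mem_insert, Finset.mem_singleton] at hl
    rcases hl with rfl | rfl
    · simp [nLit, hf] at hal
    · simp [nLit, ht] at hal
  -- the last clause is empty
  have hDs : Dv F a s = ∅ := by
    rw [Finset.eq_empty_iff_forall_notMem]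
    rintro ⟨i, b⟩ hm
    rw [mem_Dv] at hm
    obtain ⟨hi, hD⟩ := hm
    obtain ⟨l, hl, hal⟩ := sat_of_mem_REF ha (mA21 ⟨i, hi, b, rfl⟩) (by
      rintro l hl
      simp only [Finset.mem_singleton] at hl
      subst hl
      simpa [nLit, RefVar.idx] using hPs)
    simp only [Finset.mem_singleton] at hl
    subst hl
    simp [nLit, hD] at hal
  -- the list of clauses
  set U := (Finset.Icc 1 s).filter (fun u => a (.P u) = true) with hU_def
  have hUmem : ∀ u ∈ U, u ∈ Finset.Icc 1 s ∧ a (.P u) = true := by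
    intro u hu; exact Finset.mem_filter.mp hu
  have hsU : s ∈ U := Finset.mem_filter.mpr ⟨hss, hPs⟩
  set LL := U.sort (·≤·) with hLL_def
  have hmemLL : ∀ {u : ℕ}, u ∈ LL ↔ u ∈ U := fun {u} => Finset.mem_sort _
  have hLLne : LL ≠ [] := List.ne_nil_of_mem (hmemLL.mpr hsU)
  have hsorted : LL.SortedLT := Finset.sortedLT_sort U
  refine ⟨LL.map (Dv F a), ⟨?_, ?_, ?_⟩, ?_⟩
  · simpa using hLLne
  · -- the justification of every step
    intro p
    have hpc : (p : ℕ) < LL.length := by simpa using p.2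
    have hgetp : (LL.map (Dv F a)).get p = Dv F a (LL.get ⟨p, hpc⟩) := by
      simp [List.get_eq_getElem, List.getElem_map]
    set u := LL.get ⟨p, hpc⟩ with hu_def
    have hu_mem : u ∈ U := hmemLL.mp (List.get_mem LL ⟨p, hpc⟩)
    obtain ⟨huIcc, hPu⟩ := hUmem u hu_mem
    constructor
    · rw [hgetp]; exact hnt u huIcc hPu
    by_cases hax : Iv a u = 0
    · -- resolution case
      right
      have hI0 : a (.I u 0) = true := by
        have h2 := (hIfact u huIcc hPu).2; rwa [hax] at h2
      have hV0 : a (.V u 0) = false := by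
        obtain ⟨l, hl, hal⟩ := sat_of_mem_REF ha (mA9 ⟨u, huIcc, rfl⟩) (by
          rintro l hl
          simp only [Finset.mem_insert, Finset.mem_singleton] at hl
          rcases hl with rfl | rfl <;> simpa [nLit, RefVar.idx] using hPu)
        simp only [Finset.mem_insert, Finset.mem_singleton] at hl
        rcases hl with rfl | rfl
        · simp [nLit, hI0] at hal
        · simpa [nLit] using hal
      obtain ⟨hVle, hVval, -⟩ := hVfact u huIcc hPu
      set x := Vv a u with hx_def
      have hx0 : x ≠ 0 := by
        intro h; rw [h] at hVval; simp [hVval] at hV0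
      have hxIcc : x ∈ Finset.Icc 1 F.n := Finset.mem_Icc.mpr ⟨by omega, hVle⟩
      -- L u ≠ 0 and R u ≠ 0
      obtain ⟨hLle, hLval⟩ := hLfact u huIcc hPu
      obtain ⟨hRle, hRval⟩ := hRfact u huIcc hPu
      set vL := Lv a u with hvL_def
      set vR := Rv a u with hvR_def
      have hvL0 : vL ≠ 0 := by
        obtain ⟨l, hl, hal⟩ := sat_of_mem_REF ha (mA11 ⟨u, huIcc, rfl⟩) (by
          rintro l hl
          simp only [Finset.mem_insert, Finset.mem_singleton] at hl
          rcases hl with rfl | rfl <;> simpa [nLit, RefVar.idx] using hPu)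
        simp only [Finset.mem_insert, Finset.mem_singleton] at hl
        rcases hl with rfl | rfl
        · simp [nLit, hI0] at hal
        · intro h; rw [h] at hLval; simp [nLit, hLval] at hal
      have hvR0 : vR ≠ 0 := by
        obtain ⟨l, hl, hal⟩ := sat_of_mem_REF ha (mA12 ⟨u, huIcc, rfl⟩) (by
          rintro l hl
          simp only [Finset.mem_insert, Finset.mem_singleton] at hl
          rcases hl with rfl | rfl <;> simpa [nLit, RefVar.idx] using hPu)
        simp only [Finset.mem_insert, Finset.mem_singleton] at hl
        rcases hl with rfl | rfl
        · simp [nLit, hI0] at hal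
        · intro h; rw [h] at hRval; simp [nLit, hRval] at hal
      have hvLIcc : vL ∈ Finset.Icc 1 s := Finset.mem_Icc.mpr ⟨by omega, hLle⟩
      have hvRIcc : vR ∈ Finset.Icc 1 s := Finset.mem_Icc.mpr ⟨by omega, hRle⟩
      have hvLlt : vL < u := by
        by_contra hcon
        push_neg at hcon
        obtain ⟨l, hl, hal⟩ := sat_of_mem_REF ha (mA13 ⟨u, huIcc, vL, hvLIcc, hcon, rfl⟩) (by
          rintro l hl
          simp only [Finset.mem_singleton] at hl
          subst hl
          simpa [nLit, RefVar.idx] using hPu)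
        simp only [Finset.mem_singleton] at hl
        subst hl
        simp [nLit, hLval] at hal
      have hvRlt : vR < u := by
        by_contra hcon
        push_neg at hcon
        obtain ⟨l, hl, hal⟩ := sat_of_mem_REF ha (mA14 ⟨u, huIcc, vR, hvRIcc, hcon, rfl⟩) (by
          rintro l hl
          simp only [Finset.mem_singleton] at hl
          subst hl
          simpa [nLit, RefVar.idx] using hPu)
        simp only [Finset.mem_singleton] at hl
        subst hl
        simp [nLit, hRval] at hal
      -- P is true at vL and vR (A22, A23)
      have hPvL : a (.P vL) = true := by
        have h22 : ({nLit (.P u), nLit (.L u vL), pLit (.P vL)} : VClause) ∈ RREF F s :=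
          Or.inl (Or.inl (Or.inr ⟨u, huIcc, vL, hvLIcc, rfl⟩))
        obtain ⟨l, hl, hal⟩ := ha _ h22
        simp only [Finset.mem_insert, Finset.mem_singleton] at hl
        rcases hl with rfl | rfl | rfl
        · simp [nLit, hPu] at hal
        · simp [nLit, hLval] at hal
        · simpa [pLit] using hal
      have hPvR : a (.P vR) = true := by
        have h23 : ({nLit (.P u), nLit (.R u vR), pLit (.P vR)} : VClause) ∈ RREF F s :=
          Or.inl (Or.inr ⟨u, huIcc, vR, hvRIcc, rfl⟩)
        obtain ⟨l, hl, hal⟩ := ha _ h23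
        simp only [Finset.mem_insert, Finset.mem_singleton] at hl
        rcases hl with rfl | rfl | rfl
        · simp [nLit, hPu] at hal
        · simp [nLit, hRval] at hal
        · simpa [pLit] using hal
      -- positions of the premises
      have hvLU : vL ∈ U := Finset.mem_filter.mpr ⟨hvLIcc, hPvL⟩
      have hvRU : vR ∈ U := Finset.mem_filter.mpr ⟨hvRIcc, hPvR⟩
      obtain ⟨qL, hqL⟩ := List.mem_iff_get.mp (hmemLL.mpr hvLU)
      obtain ⟨qR, hqR⟩ := List.mem_iff_get.mp (hmemLL.mpr hvRU)
      have hqLlt : (qL : ℕ) < (p : ℕ) := by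
        have h2 : LL.get qL < LL.get ⟨p, hpc⟩ := by rw [hqL, ← hu_def]; exact hvLlt
        exact hsorted.strictMono_get.lt_iff_lt.mp h2
      have hqRlt : (qR : ℕ) < (p : ℕ) := by
        have h2 : LL.get qR < LL.get ⟨p, hpc⟩ := by rw [hqR, ← hu_def]; exact hvRlt
        exact hsorted.strictMono_get.lt_iff_lt.mp h2
      have hlen2 : (LL.map (Dv F a)).length = LL.length := List.length_map _
      refine ⟨⟨qR, by rw [hlen2]; exact qR.2⟩, ⟨qL, by rw [hlen2]; exact qL.2⟩,
        hqRlt, hqLlt, x, ?_⟩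
      have hgetR : (LL.map (Dv F a)).get ⟨qR, by rw [hlen2]; exact qR.2⟩ = Dv F a vR := by
        simp only [List.get_eq_getElem, List.getElem_map]
        rw [← hqR]; rfl
      have hgetL : (LL.map (Dv F a)).get ⟨qL, by rw [hlen2]; exact qL.2⟩ = Dv F a vL := by
        simp only [List.get_eq_getElem, List.getElem_map]
        rw [← hqL]; rfl
      rw [hgetR, hgetL, hgetp]
      -- (x, true) ∈ D_{vR}
      have hxR : (x, true) ∈ Dv F a vR := by
        rw [mem_Dv]
        refine ⟨hxIcc, ?_⟩
        obtain ⟨l, hl, hal⟩ := sat_of_mem_REF ha (mA16 ⟨u, huIcc, vR, hvRIcc, x, hxIcc, rfl⟩) (by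
          rintro l hl
          simp only [Finset.mem_insert, Finset.mem_singleton] at hl
          rcases hl with rfl | rfl | rfl <;>
            first
              | simpa [nLit, pLit, RefVar.idx] using hPu
              | simpa [nLit, pLit, RefVar.idx] using hPvR)
        simp only [Finset.mem_insert, Finset.mem_singleton] at hl
        rcases hl with rfl | rfl | rfl
        · simp [nLit, hRval] at hal
        · simp [nLit, hVval] at hal
        · simpa [pLit] using hal
      have hxL : (x, false) ∈ Dv F a vL := by
        rw [mem_Dv]
        refine ⟨hxIcc, ?_⟩
        obtain ⟨l, hl, hal⟩ := sat_of_mem_REF ha (mA15 ⟨u, huIcc, vL, hvLIcc, x, hxIcc, rfl⟩) (by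
          rintro l hl
          simp only [Finset.mem_insert, Finset.mem_singleton] at hl
          rcases hl with rfl | rfl | rfl <;>
            first
              | simpa [nLit, pLit, RefVar.idx] using hPu
              | simpa [nLit, pLit, RefVar.idx] using hPvL)
        simp only [Finset.mem_insert, Finset.mem_singleton] at hl
        rcases hl with rfl | rfl | rfl
        · simp [nLit, hLval] at hal
        · simp [nLit, hVval] at hal
        · simpa [pLit] using hal
      refine ⟨hxR, hxL, ?_⟩
      -- the resolvent is contained in D_u
      rintro ⟨i', b⟩ hmem
      rw [Finset.mem_union, Finset.mem_erase, Finset.mem_erase] at hmem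
      rw [mem_Dv]
      rcases hmem with ⟨hne, hmem⟩ | ⟨hne, hmem⟩
      · -- from the R-premise, use A18
        rw [mem_Dv] at hmem
        obtain ⟨hi'Icc, hD⟩ := hmem
        have hne2 : i' ≠ x := by
          intro h
          subst h
          have hb : b = false := by
            cases b
            · rfl
            · exact absurd rfl hne
          subst hb
          exact hnt vR hvRIcc hPvR x ⟨hxR, by rw [mem_Dv]; exact ⟨hi'Icc, hD⟩⟩
        refine ⟨hi'Icc, ?_⟩
        obtain ⟨l, hl, hal⟩ := sat_of_mem_REF ha
          (mA18 ⟨u, huIcc, vR, hvRIcc, x, hxIcc, i', hi'Icc, b, hne2, rfl⟩) (by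
          rintro l hl
          simp only [Finset.mem_insert, Finset.mem_singleton] at hl
          rcases hl with rfl | rfl | rfl | rfl <;>
            first
              | simpa [nLit, pLit, RefVar.idx] using hPu
              | simpa [nLit, pLit, RefVar.idx] using hPvR)
        simp only [Finset.mem_insert, Finset.mem_singleton] at hl
        rcases hl with rfl | rfl | rfl | rfl
        · simp [nLit, hRval] at hal
        · simp [nLit, hVval] at hal
        · simp [nLit, hD] at hal
        · simpa [pLit] using hal
      · -- from the L-premise, use A17
        rw [mem_Dv] at hmem
        obtain ⟨hi'Icc, hD⟩ := hmem
        have hne2 : i' ≠ x := by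
          intro h
          subst h
          have hb : b = true := by
            cases b
            · exact absurd rfl hne
            · rfl
          subst hb
          exact hnt vL hvLIcc hPvL x ⟨by rw [mem_Dv]; exact ⟨hi'Icc, hD⟩, hxL⟩
        refine ⟨hi'Icc, ?_⟩
        obtain ⟨l, hl, hal⟩ := sat_of_mem_REF ha
          (mA17 ⟨u, huIcc, vL, hvLIcc, x, hxIcc, i', hi'Icc, b, hne2, rfl⟩) (by
          rintro l hl
          simp only [Finset.mem_insert, Finset.mem_singleton] at hl
          rcases hl with rfl | rfl | rfl | rfl <;>
            first
              | simpa [nLit, pLit, RefVar.idx] using hPu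
              | simpa [nLit, pLit, RefVar.idx] using hPvL)
        simp only [Finset.mem_insert, Finset.mem_singleton] at hl
        rcases hl with rfl | rfl | rfl | rfl
        · simp [nLit, hLval] at hal
        · simp [nLit, hVval] at hal
        · simp [nLit, hD] at hal
        · simpa [pLit] using hal
    · -- axiom case
      left
      obtain ⟨hIle, hIval⟩ := hIfact u huIcc hPu
      set j := Iv a u with hj_def
      have hj : j ∈ Finset.Icc 1 F.m := Finset.mem_Icc.mpr ⟨by omega, hIle⟩
      refine ⟨F.Cl j, ⟨j, hj, rfl⟩, ?_⟩
      rw [hgetp]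
      rintro ⟨i, b⟩ hlC
      have hiIcc : i ∈ Finset.Icc 1 F.n := (hWF.1 j hj).2 (i, b) hlC
      rw [mem_Dv]
      refine ⟨hiIcc, ?_⟩
      obtain ⟨l, hl, hal⟩ := sat_of_mem_REF ha (mA19 ⟨u, huIcc, j, hj, i, b, hlC, rfl⟩) (by
        rintro l hl
        simp only [Finset.mem_insert, Finset.mem_singleton] at hl
        rcases hl with rfl | rfl <;> simpa [nLit, pLit, RefVar.idx] using hPu)
      simp only [Finset.mem_insert, Finset.mem_singleton] at hl
      rcases hl with rfl | rfl
      · simp [nLit, hIval] at hal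
      · simpa [pLit] using hal
  · -- last clause
    have h1 : LL.getLast hLLne = s := by
      have hmem' : LL.getLast hLLne ∈ U := hmemLL.mp (List.getLast_mem hLLne)
      have hle1 : LL.getLast hLLne ≤ s := (Finset.mem_Icc.mp (hUmem _ hmem').1).2
      have hge : s ≤ LL.getLast hLLne := by
        obtain ⟨q, hq⟩ := List.mem_iff_get.mp (hmemLL.mpr hsU)
        rw [List.getLast_eq_getElem]
        calc s = LL.get q := hq.symm
          _ ≤ LL.get ⟨LL.length - 1, by have := q.2; omega⟩ := by
              apply hsorted.strictMono_get.monotone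
              rw [Fin.le_def]
              have := q.2
              simp
              omega
      omega
    rw [List.getLast?_map, List.getLast?_eq_getLast hLLne, Option.map_some, h1, hDs]
  · -- length bound
    rw [List.length_map, Finset.length_sort]
    calc U.card ≤ (Finset.Icc 1 s).card := Finset.card_filter_le _ _
      _ = s := by rw [Nat.card_Icc]; omega

end Aux13

namespace Aux13

/-- A "good" refutation: a Resolution refutation in which every resolution step
resolves on a variable in `[1..n]`. -/
def GoodRef (n : ℕ) (F : Set (Clause ℕ)) (P : List (Clause ℕ)) : Prop :=
  P ≠ [] ∧
  (∀ u : Fin P.length,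
      Clause.Nontaut (P.get u) ∧
      ((∃ C ∈ F, C ⊆ P.get u) ∨
        ∃ v w : Fin P.length, (v : ℕ) < (u : ℕ) ∧ (w : ℕ) < (u : ℕ) ∧ ∃ x ∈ Finset.Icc 1 n,
          (x, true) ∈ P.get v ∧ (x, false) ∈ P.get w ∧
          ((P.get v).erase (x, true) ∪ (P.get w).erase (x, false)) ⊆ P.get u)) ∧
  P.getLast? = some (∅ : Clause ℕ)

/-- Restriction of a clause to the variables `[1..n]`. -/
def rcl (n : ℕ) (C : Clause ℕ) : Clause ℕ := C.filter (fun l => l.1 ∈ Finset.Icc 1 n)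

lemma rcl_subset {n : ℕ} {C : Clause ℕ} : rcl n C ⊆ C := Finset.filter_subset _ _

lemma mem_rcl {n : ℕ} {C : Clause ℕ} {l : ℕ × Bool} :
    l ∈ rcl n C ↔ l ∈ C ∧ l.1 ∈ Finset.Icc 1 n := Finset.mem_filter

/-- Normalization: every Resolution refutation of a CNF with variables in `[1..n]`
can be turned into a good refutation of the same length. -/
lemma normalize (n : ℕ) (F : Set (Clause ℕ)) (hF : ∀ C ∈ F, ∀ l ∈ C, l.1 ∈ Finset.Icc 1 n)
    (P : List (Clause ℕ)) (h : IsResRefutation F P) :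
    GoodRef n F (P.map (rcl n)) ∧ (P.map (rcl n)).length = P.length := by
  obtain ⟨hne, hjust, hlast⟩ := h
  set Q := P.map (rcl n) with hQ_def
  have hlen : Q.length = P.length := List.length_map _
  have hget : ∀ (k : ℕ) (hk : k < Q.length), Q.get ⟨k, hk⟩ = rcl n (P.get ⟨k, by omega⟩) := by
    intro k hk
    simp [hQ_def, List.get_eq_getElem, List.getElem_map]
  refine ⟨⟨by rw [hQ_def]; simpa using hne, ?_, ?_⟩, hlen⟩
  · -- justification, by strong induction
    have key : ∀ (k : ℕ) (hk : k < Q.length),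
        Clause.Nontaut (Q.get ⟨k, hk⟩) ∧
        ((∃ C ∈ F, C ⊆ Q.get ⟨k, hk⟩) ∨
          ∃ v w : Fin Q.length, (v : ℕ) < k ∧ (w : ℕ) < k ∧ ∃ x ∈ Finset.Icc 1 n,
            (x, true) ∈ Q.get v ∧ (x, false) ∈ Q.get w ∧
            ((Q.get v).erase (x, true) ∪ (Q.get w).erase (x, false)) ⊆ Q.get ⟨k, hk⟩) := by
      intro k
      induction k using Nat.strong_induction_on with
      | _ k IH =>
        intro hk
        obtain ⟨hnt, hj⟩ := hjust ⟨k, by omega⟩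
        have hntQ : Clause.Nontaut (Q.get ⟨k, hk⟩) := by
          rw [hget]
          intro x hx
          exact hnt x ⟨rcl_subset hx.1, rcl_subset hx.2⟩
        refine ⟨hntQ, ?_⟩
        rcases hj with ⟨C, hC, hsub⟩ | ⟨v, w, hv, hw, x, hxv, hxw, hres⟩
        · left
          refine ⟨C, hC, ?_⟩
          rw [hget]
          intro l hl
          exact mem_rcl.mpr ⟨hsub hl, hF C hC l hl⟩
        · have hv' : (v : ℕ) < k := hv
          have hw' : (w : ℕ) < k := hw
          by_cases hx : x ∈ Finset.Icc 1 n
          · right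
            refine ⟨⟨v, by omega⟩, ⟨w, by omega⟩, hv', hw', x, hx, ?_, ?_, ?_⟩
            · rw [hget]; exact mem_rcl.mpr ⟨by convert hxv using 3, hx⟩
            · rw [hget]; exact mem_rcl.mpr ⟨by convert hxw using 3, hx⟩
            · rw [hget, hget, hget]
              rintro l hl
              rw [Finset.mem_union, Finset.mem_erase, Finset.mem_erase] at hl
              rcases hl with ⟨hlne, hl⟩ | ⟨hlne, hl⟩ <;> rw [mem_rcl] at hl
              · refine mem_rcl.mpr ⟨hres ?_, hl.2⟩
                exact Finset.mem_union_left _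
                  (Finset.mem_erase.mpr ⟨hlne, by convert hl.1 using 3⟩)
              · refine mem_rcl.mpr ⟨hres ?_, hl.2⟩
                exact Finset.mem_union_right _
                  (Finset.mem_erase.mpr ⟨hlne, by convert hl.1 using 3⟩)
          · -- resolution variable out of range: reuse the justification of the premise v
            have hvQ : (v : ℕ) < Q.length := by omega
            have hsubQ : Q.get ⟨v, hvQ⟩ ⊆ Q.get ⟨k, hk⟩ := by
              rw [hget, hget]
              intro l hl
              rw [mem_rcl] at hl
              refine mem_rcl.mpr ⟨hres ?_, hl.2⟩
              refine Finset.mem_union_left _ (Finset.mem_erase.mpr ⟨?_, by convert hl.1 using 3⟩)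
              intro hcon
              rw [hcon] at hl
              exact hx hl.2
            obtain ⟨-, hJv⟩ := IH v hv' hvQ
            rcases hJv with ⟨C, hC, hsub⟩ | ⟨v2, w2, hv2, hw2, x2, hx2, hm1, hm2, hres2⟩
            · exact Or.inl ⟨C, hC, hsub.trans hsubQ⟩
            · exact Or.inr ⟨v2, w2, by omega, by omega, x2, hx2, hm1, hm2, hres2.trans hsubQ⟩
    intro u
    obtain ⟨h1, h2⟩ := key u.1 (by simpa using u.2)
    exact ⟨by convert h1, by convert h2⟩
  · -- last clause
    rw [hQ_def, List.getLast?_map, hlast, Option.map_some]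
    simp [rcl]

end Aux13
namespace Aux13

/-- Padding: a good refutation can be padded to any length `s ≥` its length. -/
lemma pad (n : ℕ) (F : Set (Clause ℕ)) (Q : List (Clause ℕ)) (h : GoodRef n F Q)
    (s : ℕ) (hles : Q.length ≤ s) :
    ∃ Q' : List (Clause ℕ), GoodRef n F Q' ∧ Q'.length = s := by
  obtain ⟨hne, hjust, hlast⟩ := h
  have h0 : 0 < Q.length := List.length_pos_iff.mpr hne
  set r := s - Q.length with hr_def
  set Q' := List.replicate r (Q.head hne) ++ Q with hQ'_def
  have hlen' : Q'.length = s := by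
    simp only [hQ'_def, List.length_append, List.length_replicate]
    omega
  -- the head is justified as an axiom weakening
  have hax0 : ∃ C ∈ F, C ⊆ Q.head hne := by
    obtain ⟨-, hj⟩ := hjust ⟨0, h0⟩
    rcases hj with hj | ⟨v, w, hv, hw, -⟩
    · rw [List.head_eq_getElem]; exact hj
    · have hv0 : (v : ℕ) < 0 := hv
      omega
  have hnt0 : Clause.Nontaut (Q.head hne) := by
    have := (hjust ⟨0, h0⟩).1
    rwa [List.head_eq_getElem]
  have hgetlow : ∀ (k : ℕ) (hk : k < r), Q'.get ⟨k, by omega⟩ = Q.head hne := by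
    intro k hk
    simp only [hQ'_def, List.get_eq_getElem]
    rw [List.getElem_append_left (by simpa using hk)]
    simp
  have hgethigh : ∀ (k : ℕ) (hk1 : r ≤ k) (hk2 : k < s),
      Q'.get ⟨k, by omega⟩ = Q.get ⟨k - r, by omega⟩ := by
    intro k hk1 hk2
    simp only [hQ'_def, List.get_eq_getElem]
    rw [List.getElem_append_right (by simpa using hk1)]
    simp
  refine ⟨Q', ⟨?_, ?_, ?_⟩, hlen'⟩
  · intro hcon
    rw [hcon] at hlen'
    simp at hlen'
    omega
  · intro u
    have hu2 : (u : ℕ) < s := by omega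
    by_cases hu : (u : ℕ) < r
    · have hg : Q'.get u = Q.head hne := by
        have := hgetlow u hu
        convert this using 2
      rw [hg]
      exact ⟨hnt0, Or.inl hax0⟩
    · push_neg at hu
      have hg : Q'.get u = Q.get ⟨u - r, by omega⟩ := by
        have := hgethigh u hu hu2
        convert this using 2
      obtain ⟨hnt, hj⟩ := hjust ⟨u - r, by omega⟩
      rw [← hg] at hnt hj
      refine ⟨hnt, ?_⟩
      rcases hj with hj | ⟨v, w, hv, hw, x, hx, hm1, hm2, hres⟩
      · exact Or.inl hj
      · right
        have hv' : (v : ℕ) < (u : ℕ) - r := hv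
        have hw' : (w : ℕ) < (u : ℕ) - r := hw
        have hvlt : (v : ℕ) + r < Q'.length := by omega
        have hwlt : (w : ℕ) + r < Q'.length := by omega
        have hfinv : (⟨(v : ℕ) + r - r, by omega⟩ : Fin Q.length) = v := by
          apply Fin.ext; show (v : ℕ) + r - r = (v : ℕ); omega
        have hfinw : (⟨(w : ℕ) + r - r, by omega⟩ : Fin Q.length) = w := by
          apply Fin.ext; show (w : ℕ) + r - r = (w : ℕ); omega
        refine ⟨⟨(v : ℕ) + r, hvlt⟩, ⟨(w : ℕ) + r, hwlt⟩,
          show (v : ℕ) + r < (u : ℕ) by omega, show (w : ℕ) + r < (u : ℕ) by omega,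
          x, hx, ?_, ?_, ?_⟩
        · rw [hgethigh ((v : ℕ) + r) (by omega) (by omega), hfinv]
          exact hm1
        · rw [hgethigh ((w : ℕ) + r) (by omega) (by omega), hfinw]
          exact hm2
        · have h1 : Q'.get ⟨(v : ℕ) + r, hvlt⟩ = Q.get v := by
            rw [hgethigh ((v : ℕ) + r) (by omega) (by omega), hfinv]
          have h2 : Q'.get ⟨(w : ℕ) + r, hwlt⟩ = Q.get w := by
            rw [hgethigh ((w : ℕ) + r) (by omega) (by omega), hfinw]
          rw [h1, h2]
          exact hres

  · rw [hQ'_def, List.getLast?_append, hlast]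
    rfl

end Aux13
namespace Aux13

/-- The `u`-th clause (1-based) of a list. -/
def DclQ (Q : List (Clause ℕ)) (u : ℕ) : Clause ℕ := Q.getD (u - 1) ∅

/-- The least index of an axiom clause contained in the `u`-th clause (`0` if none). -/
noncomputable def axjQ (F : CNFFam) (Q : List (Clause ℕ)) (u : ℕ) : ℕ :=
  sInf {j | j ∈ Finset.Icc 1 F.m ∧ F.Cl j ⊆ DclQ Q u}

/-- `t = (v, w, x)` is a valid resolution witness for step `u`. -/
def RP (F : CNFFam) (Q : List (Clause ℕ)) (u : ℕ) (t : ℕ × ℕ × ℕ) : Prop :=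
  t.1 < u ∧ t.2.1 < u ∧ 1 ≤ t.1 ∧ 1 ≤ t.2.1 ∧ t.2.2 ∈ Finset.Icc 1 F.n ∧
  (t.2.2, true) ∈ DclQ Q t.1 ∧ (t.2.2, false) ∈ DclQ Q t.2.1 ∧
  ((DclQ Q t.1).erase (t.2.2, true) ∪ (DclQ Q t.2.1).erase (t.2.2, false)) ⊆ DclQ Q u

open scoped Classical in
noncomputable def rwQ (F : CNFFam) (Q : List (Clause ℕ)) (u : ℕ) : ℕ × ℕ × ℕ :=
  if h : ∃ t, RP F Q u t then h.choose else (0, 0, 0)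

lemma rwQ_spec {F : CNFFam} {Q : List (Clause ℕ)} {u : ℕ} (h : ∃ t, RP F Q u t) :
    RP F Q u (rwQ F Q u) := by
  rw [rwQ, dif_pos h]
  exact h.choose_spec

open scoped Classical in
noncomputable def VfQ (F : CNFFam) (Q : List (Clause ℕ)) (u : ℕ) : ℕ :=
  if axjQ F Q u ≠ 0 then 0 else (rwQ F Q u).2.2
open scoped Classical in
noncomputable def LfQ (F : CNFFam) (Q : List (Clause ℕ)) (u : ℕ) : ℕ :=
  if axjQ F Q u ≠ 0 then 0 else (rwQ F Q u).2.1
open scoped Classical in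
noncomputable def RfQ (F : CNFFam) (Q : List (Clause ℕ)) (u : ℕ) : ℕ :=
  if axjQ F Q u ≠ 0 then 0 else (rwQ F Q u).1

open scoped Classical in
/-- The satisfying assignment built from a good refutation. -/
noncomputable def bA (F : CNFFam) (Q : List (Clause ℕ)) : RefVar → Bool
  | .D u i b => decide ((i, b) ∈ DclQ Q u)
  | .V u i => decide (i = VfQ F Q u)
  | .I u j => decide (j = axjQ F Q u)
  | .L u v => decide (v = LfQ F Q u)
  | .R u v => decide (v = RfQ F Q u)
  | .P _ => true

lemma lift_rel {a : RefVar → Bool} {C₀ : VClause} (h : ∃ l ∈ C₀, a l.1 = l.2) :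
    ∃ l ∈ relCl C₀, a l.1 = l.2 := by
  obtain ⟨l, hl, ha⟩ := h
  exact ⟨l, Finset.mem_union_left _ hl, ha⟩

lemma backward (F : CNFFam) (hWF : F.WF) (s : ℕ) (hs : 1 ≤ s) (Q : List (Clause ℕ))
    (hG : GoodRef F.n F.clauseSet Q) (hlen : Q.length = s) : CnfSat (RREF F s) := by
  obtain ⟨hne, hjust, hlast⟩ := hG
  have hgetD : ∀ (u : ℕ) (h1 : 1 ≤ u) (h2 : u ≤ s), DclQ Q u = Q.get ⟨u - 1, by omega⟩ := by
    intro u h1 h2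
    rw [DclQ, List.getD_eq_getElem _ _ (by omega)]
    rfl
  -- axiom facts
  have hAx : ∀ u, axjQ F Q u ≠ 0 →
      axjQ F Q u ∈ Finset.Icc 1 F.m ∧ F.Cl (axjQ F Q u) ⊆ DclQ Q u := by
    intro u h0
    by_cases hne' : {j | j ∈ Finset.Icc 1 F.m ∧ F.Cl j ⊆ DclQ Q u}.Nonempty
    · exact Nat.sInf_mem hne'
    · exfalso
      rw [Set.not_nonempty_iff_eq_empty] at hne'
      rw [axjQ, hne', Nat.sInf_empty] at h0
      exact h0 rfl
  -- resolution facts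
  have hRes : ∀ u, 1 ≤ u → u ≤ s → axjQ F Q u = 0 → RP F Q u (rwQ F Q u) := by
    intro u h1 h2 h0
    obtain ⟨-, hj⟩ := hjust ⟨u - 1, by omega⟩
    rcases hj with ⟨C, hC, hsub⟩ | ⟨v, w, hv, hw, x, hx, hm1, hm2, hres⟩
    · exfalso
      obtain ⟨j, hjIcc, rfl⟩ := hC
      have hne' : {j | j ∈ Finset.Icc 1 F.m ∧ F.Cl j ⊆ DclQ Q u}.Nonempty :=
        ⟨j, hjIcc, by rw [hgetD u h1 h2]; exact hsub⟩
      have := Nat.sInf_mem hne'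
      rw [show sInf {j | j ∈ Finset.Icc 1 F.m ∧ F.Cl j ⊆ DclQ Q u} = axjQ F Q u from rfl,
        h0] at this
      have h5 := Finset.mem_Icc.mp this.1
      omega
    · apply rwQ_spec
      have hv' : (v : ℕ) < u - 1 := hv
      have hw' : (w : ℕ) < u - 1 := hw
      refine ⟨((v : ℕ) + 1, (w : ℕ) + 1, x), by show (v:ℕ)+1 < u; omega,
        by show (w:ℕ)+1 < u; omega, by show 1 ≤ (v:ℕ)+1; omega,
        by show 1 ≤ (w:ℕ)+1; omega, hx, ?_, ?_, ?_⟩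
      · show (x, true) ∈ DclQ Q ((v : ℕ) + 1)
        rw [hgetD ((v : ℕ) + 1) (by omega) (by omega)]
        have hfin : (⟨(v : ℕ) + 1 - 1, by omega⟩ : Fin Q.length) = v := by
          apply Fin.ext; show (v : ℕ) + 1 - 1 = (v : ℕ); omega
        rw [hfin]; exact hm1
      · show (x, false) ∈ DclQ Q ((w : ℕ) + 1)
        rw [hgetD ((w : ℕ) + 1) (by omega) (by omega)]
        have hfin : (⟨(w : ℕ) + 1 - 1, by omega⟩ : Fin Q.length) = w := by
          apply Fin.ext; show (w : ℕ) + 1 - 1 = (w : ℕ); omega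
        rw [hfin]; exact hm2
      · show (DclQ Q ((v : ℕ) + 1)).erase (x, true) ∪
            (DclQ Q ((w : ℕ) + 1)).erase (x, false) ⊆ DclQ Q u
        have e1 : DclQ Q ((v : ℕ) + 1) = Q.get v := by
          rw [hgetD ((v : ℕ) + 1) (by omega) (by omega)]
          have hfin : (⟨(v : ℕ) + 1 - 1, by omega⟩ : Fin Q.length) = v := by
            apply Fin.ext; show (v : ℕ) + 1 - 1 = (v : ℕ); omega
          rw [hfin]
        have e2 : DclQ Q ((w : ℕ) + 1) = Q.get w := by
          rw [hgetD ((w : ℕ) + 1) (by omega) (by omega)]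
          have hfin : (⟨(w : ℕ) + 1 - 1, by omega⟩ : Fin Q.length) = w := by
            apply Fin.ext; show (w : ℕ) + 1 - 1 = (w : ℕ); omega
          rw [hfin]
        rw [e1, e2, hgetD u h1 h2]
        exact hres
  -- non-tautology
  have hNT : ∀ u, 1 ≤ u → u ≤ s → Clause.Nontaut (DclQ Q u) := by
    intro u h1 h2
    rw [hgetD u h1 h2]
    exact (hjust ⟨u - 1, by omega⟩).1
  -- the last clause is empty
  have hlastD : DclQ Q s = ∅ := by
    rw [hgetD s hs le_rfl]
    rw [List.getLast?_eq_getLast hne, Option.some_inj] at hlast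
    rw [← hlast, List.getLast_eq_getElem]
    show _ = Q.get ⟨Q.length - 1, _⟩
    congr 1
    apply Fin.ext
    show s - 1 = Q.length - 1
    omega
  -- bounds for the value functions
  have hVle : ∀ u, 1 ≤ u → u ≤ s → VfQ F Q u ≤ F.n := by
    intro u h1 h2
    by_cases hax : axjQ F Q u = 0
    · rw [VfQ, if_neg (by simpa using hax)]
      exact (Finset.mem_Icc.mp (hRes u h1 h2 hax).2.2.2.2.1).2
    · rw [VfQ, if_pos hax]
      omega
  have hIle : ∀ u, axjQ F Q u ≤ F.m := by
    intro u
    by_cases hax : axjQ F Q u = 0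
    · omega
    · exact (Finset.mem_Icc.mp (hAx u hax).1).2
  have hLmem : ∀ u, 1 ≤ u → u ≤ s → LfQ F Q u ∈ insert 0 (Finset.Icc 1 s) := by
    intro u h1 h2
    by_cases hax : axjQ F Q u = 0
    · rw [LfQ, if_neg (by simpa using hax)]
      have h3 := hRes u h1 h2 hax
      exact Finset.mem_insert.mpr (Or.inr (Finset.mem_Icc.mpr ⟨h3.2.2.2.1, by
        have := h3.2.1; omega⟩))
    · rw [LfQ, if_pos hax]
      exact Finset.mem_insert_self _ _
  have hRmem : ∀ u, 1 ≤ u → u ≤ s → RfQ F Q u ∈ insert 0 (Finset.Icc 1 s) := by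
    intro u h1 h2
    by_cases hax : axjQ F Q u = 0
    · rw [RfQ, if_neg (by simpa using hax)]
      have h3 := hRes u h1 h2 hax
      exact Finset.mem_insert.mpr (Or.inr (Finset.mem_Icc.mpr ⟨h3.2.2.1, by
        have := h3.1; omega⟩))
    · rw [RfQ, if_pos hax]
      exact Finset.mem_insert_self _ _
  -- the assignment
  refine ⟨bA F Q, ?_⟩
  intro C hC
  rcases hC with ((hrel | h22) | h23) | h24
  · -- relativized REF clauses
    obtain ⟨C₀, hC₀, rfl⟩ := hrel
    apply lift_rel
    rcases hC₀ with hh | ⟨i, hi, b, rfl⟩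
    rcases hh with hh | ⟨u, hu, i, hi, rfl⟩
    rcases hh with hh | ⟨u, hu, j, hj, i, b, hib, rfl⟩
    rcases hh with hh | ⟨u, hu, v, hv, i, hi, i', hi', b, hne', rfl⟩
    rcases hh with hh | ⟨u, hu, v, hv, i, hi, i', hi', b, hne', rfl⟩
    rcases hh with hh | ⟨u, hu, v, hv, i, hi, rfl⟩
    rcases hh with hh | ⟨u, hu, v, hv, i, hi, rfl⟩
    rcases hh with hh | ⟨u, hu, v, hv, hle, rfl⟩
    rcases hh with hh | ⟨u, hu, v, hv, hle, rfl⟩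
    rcases hh with hh | ⟨u, hu, rfl⟩
    rcases hh with hh | ⟨u, hu, rfl⟩
    rcases hh with hh | ⟨u, hu, rfl⟩
    rcases hh with hh | ⟨u, hu, rfl⟩
    rcases hh with hh | ⟨u, hu, v, hv, v', hv', hne', rfl⟩
    rcases hh with hh | ⟨u, hu, v, hv, v', hv', hne', rfl⟩
    rcases hh with hh | ⟨u, hu, j, hj, j', hj', hne', rfl⟩
    rcases hh with hh | ⟨u, hu, i, hi, i', hi', hne', rfl⟩
    rcases hh with hh | ⟨u, hu, rfl⟩
    rcases hh with hh | ⟨u, hu, rfl⟩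
    rcases hh with ⟨u, hu, rfl⟩ | ⟨u, hu, rfl⟩
    -- A1
    · obtain ⟨h1, h2⟩ := Finset.mem_Icc.mp hu
      refine ⟨pLit (.V u (VfQ F Q u)), Finset.mem_image.mpr
        ⟨VfQ F Q u, Finset.mem_range.mpr (by have := hVle u h1 h2; omega), rfl⟩, by
          simp [bA, pLit]⟩
    -- A2
    · obtain ⟨h1, h2⟩ := Finset.mem_Icc.mp hu
      refine ⟨pLit (.I u (axjQ F Q u)), Finset.mem_image.mpr
        ⟨axjQ F Q u, Finset.mem_range.mpr (by have := hIle u; omega), rfl⟩, by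
          simp [bA, pLit]⟩
    -- A3
    · obtain ⟨h1, h2⟩ := Finset.mem_Icc.mp hu
      exact ⟨pLit (.L u (LfQ F Q u)), Finset.mem_image.mpr
        ⟨LfQ F Q u, hLmem u h1 h2, rfl⟩, by simp [bA, pLit]⟩
    -- A4
    · obtain ⟨h1, h2⟩ := Finset.mem_Icc.mp hu
      exact ⟨pLit (.R u (RfQ F Q u)), Finset.mem_image.mpr
        ⟨RfQ F Q u, hRmem u h1 h2, rfl⟩, by simp [bA, pLit]⟩
    -- A5
    · by_cases hc : i = VfQ F Q u
      · refine ⟨nLit (.V u i'), by simp [nLit], ?_⟩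
        simp only [nLit, bA, decide_eq_false_iff_not]
        omega
      · refine ⟨nLit (.V u i), by simp [nLit], ?_⟩
        simp only [nLit, bA, decide_eq_false_iff_not]
        exact hc
    -- A6
    · by_cases hc : j = axjQ F Q u
      · refine ⟨nLit (.I u j'), by simp [nLit], ?_⟩
        simp only [nLit, bA, decide_eq_false_iff_not]
        omega
      · refine ⟨nLit (.I u j), by simp [nLit], ?_⟩
        simp only [nLit, bA, decide_eq_false_iff_not]
        exact hc
    -- A7
    · by_cases hc : v = LfQ F Q u
      · refine ⟨nLit (.L u v'), by simp [nLit], ?_⟩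
        simp only [nLit, bA, decide_eq_false_iff_not]
        omega
      · refine ⟨nLit (.L u v), by simp [nLit], ?_⟩
        simp only [nLit, bA, decide_eq_false_iff_not]
        exact hc
    -- A8
    · by_cases hc : v = RfQ F Q u
      · refine ⟨nLit (.R u v'), by simp [nLit], ?_⟩
        simp only [nLit, bA, decide_eq_false_iff_not]
        omega
      · refine ⟨nLit (.R u v), by simp [nLit], ?_⟩
        simp only [nLit, bA, decide_eq_false_iff_not]
        exact hc
    -- A9
    · obtain ⟨h1, h2⟩ := Finset.mem_Icc.mp hu
      by_cases hax : axjQ F Q u = 0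
      · refine ⟨nLit (.V u 0), by simp [nLit], ?_⟩
        simp only [nLit, bA, decide_eq_false_iff_not]
        intro hc
        have h3 := hRes u h1 h2 hax
        have h4 := (Finset.mem_Icc.mp h3.2.2.2.2.1).1
        rw [VfQ, if_neg (by simpa using hax)] at hc
        omega
      · refine ⟨nLit (.I u 0), by simp [nLit], ?_⟩
        simp only [nLit, bA, decide_eq_false_iff_not]
        omega
    -- A10
    · by_cases hax : axjQ F Q u = 0
      · refine ⟨pLit (.I u 0), by simp [pLit, nLit], ?_⟩
        simp only [pLit, bA, decide_eq_true_eq]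
        omega
      · refine ⟨pLit (.V u 0), by simp [pLit, nLit], ?_⟩
        simp only [pLit, bA, decide_eq_true_eq]
        rw [VfQ, if_pos hax]
    -- A11
    · obtain ⟨h1, h2⟩ := Finset.mem_Icc.mp hu
      by_cases hax : axjQ F Q u = 0
      · refine ⟨nLit (.L u 0), by simp [nLit], ?_⟩
        simp only [nLit, bA, decide_eq_false_iff_not]
        intro hc
        have h3 := hRes u h1 h2 hax
        have h4 := h3.2.2.2.1
        rw [LfQ, if_neg (by simpa using hax)] at hc
        omega
      · refine ⟨nLit (.I u 0), by simp [nLit], ?_⟩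
        simp only [nLit, bA, decide_eq_false_iff_not]
        omega
    -- A12
    · obtain ⟨h1, h2⟩ := Finset.mem_Icc.mp hu
      by_cases hax : axjQ F Q u = 0
      · refine ⟨nLit (.R u 0), by simp [nLit], ?_⟩
        simp only [nLit, bA, decide_eq_false_iff_not]
        intro hc
        have h3 := hRes u h1 h2 hax
        have h4 := h3.2.2.1
        rw [RfQ, if_neg (by simpa using hax)] at hc
        omega
      · refine ⟨nLit (.I u 0), by simp [nLit], ?_⟩
        simp only [nLit, bA, decide_eq_false_iff_not]
        omega
    -- A13
    · obtain ⟨h1, h2⟩ := Finset.mem_Icc.mp hu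
      obtain ⟨hv1, hv2⟩ := Finset.mem_Icc.mp hv
      refine ⟨nLit (.L u v), Finset.mem_singleton_self _, ?_⟩
      simp only [nLit, bA, decide_eq_false_iff_not]
      intro hc
      by_cases hax : axjQ F Q u = 0
      · have h3 := hRes u h1 h2 hax
        have h4 := h3.2.1
        rw [LfQ, if_neg (by simpa using hax)] at hc
        omega
      · rw [LfQ, if_pos hax] at hc
        omega
    -- A14
    · obtain ⟨h1, h2⟩ := Finset.mem_Icc.mp hu
      obtain ⟨hv1, hv2⟩ := Finset.mem_Icc.mp hv
      refine ⟨nLit (.R u v), Finset.mem_singleton_self _, ?_⟩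
      simp only [nLit, bA, decide_eq_false_iff_not]
      intro hc
      by_cases hax : axjQ F Q u = 0
      · have h3 := hRes u h1 h2 hax
        have h4 := h3.1
        rw [RfQ, if_neg (by simpa using hax)] at hc
        omega
      · rw [RfQ, if_pos hax] at hc
        omega
    -- A15
    · obtain ⟨h1, h2⟩ := Finset.mem_Icc.mp hu
      obtain ⟨hi1, hi2⟩ := Finset.mem_Icc.mp hi
      by_cases hc1 : v = LfQ F Q u
      case neg =>
        refine ⟨nLit (.L u v), by simp [nLit], ?_⟩
        simp only [nLit, bA, decide_eq_false_iff_not]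
        exact hc1
      by_cases hc2 : i = VfQ F Q u
      case neg =>
        refine ⟨nLit (.V u i), by simp [nLit], ?_⟩
        simp only [nLit, bA, decide_eq_false_iff_not]
        exact hc2
      have hax : axjQ F Q u = 0 := by
        by_contra hax
        rw [VfQ, if_pos hax] at hc2
        omega
      have h3 := hRes u h1 h2 hax
      refine ⟨pLit (.D v i false), by simp [pLit, nLit], ?_⟩
      simp only [pLit, bA, decide_eq_true_eq]
      rw [hc1, hc2, LfQ, VfQ, if_neg (by simpa using hax), if_neg (by simpa using hax)]
      exact h3.2.2.2.2.2.2.1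
    -- A16
    · obtain ⟨h1, h2⟩ := Finset.mem_Icc.mp hu
      obtain ⟨hi1, hi2⟩ := Finset.mem_Icc.mp hi
      by_cases hc1 : v = RfQ F Q u
      case neg =>
        refine ⟨nLit (.R u v), by simp [nLit], ?_⟩
        simp only [nLit, bA, decide_eq_false_iff_not]
        exact hc1
      by_cases hc2 : i = VfQ F Q u
      case neg =>
        refine ⟨nLit (.V u i), by simp [nLit], ?_⟩
        simp only [nLit, bA, decide_eq_false_iff_not]
        exact hc2
      have hax : axjQ F Q u = 0 := by
        by_contra hax
        rw [VfQ, if_pos hax] at hc2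
        omega
      have h3 := hRes u h1 h2 hax
      refine ⟨pLit (.D v i true), by simp [pLit, nLit], ?_⟩
      simp only [pLit, bA, decide_eq_true_eq]
      rw [hc1, hc2, RfQ, VfQ, if_neg (by simpa using hax), if_neg (by simpa using hax)]
      exact h3.2.2.2.2.2.1
    -- A17
    · obtain ⟨h1, h2⟩ := Finset.mem_Icc.mp hu
      obtain ⟨hi1, hi2⟩ := Finset.mem_Icc.mp hi
      by_cases hc1 : v = LfQ F Q u
      case neg =>
        refine ⟨nLit (.L u v), by simp [nLit], ?_⟩
        simp only [nLit, bA, decide_eq_false_iff_not]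
        exact hc1
      by_cases hc2 : i = VfQ F Q u
      case neg =>
        refine ⟨nLit (.V u i), by simp [nLit], ?_⟩
        simp only [nLit, bA, decide_eq_false_iff_not]
        exact hc2
      by_cases hc3 : (i', b) ∈ DclQ Q v
      case neg =>
        refine ⟨nLit (.D v i' b), by simp [nLit], ?_⟩
        simp only [nLit, bA, decide_eq_false_iff_not]
        exact hc3
      have hax : axjQ F Q u = 0 := by
        by_contra hax
        rw [VfQ, if_pos hax] at hc2
        omega
      have h3 := hRes u h1 h2 hax
      have hxv : i = (rwQ F Q u).2.2 := by rw [hc2, VfQ, if_neg (by simpa using hax)]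
      have hvv : v = (rwQ F Q u).2.1 := by rw [hc1, LfQ, if_neg (by simpa using hax)]
      refine ⟨pLit (.D u i' b), by simp [pLit, nLit], ?_⟩
      simp only [pLit, bA, decide_eq_true_eq]
      apply h3.2.2.2.2.2.2.2
      apply Finset.mem_union_right
      apply Finset.mem_erase.mpr
      constructor
      · intro hcc
        apply hne'
        rw [hxv]
        exact congrArg Prod.fst hcc
      · rw [← hvv]
        exact hc3
    -- A18
    · obtain ⟨h1, h2⟩ := Finset.mem_Icc.mp hu
      obtain ⟨hi1, hi2⟩ := Finset.mem_Icc.mp hi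
      by_cases hc1 : v = RfQ F Q u
      case neg =>
        refine ⟨nLit (.R u v), by simp [nLit], ?_⟩
        simp only [nLit, bA, decide_eq_false_iff_not]
        exact hc1
      by_cases hc2 : i = VfQ F Q u
      case neg =>
        refine ⟨nLit (.V u i), by simp [nLit], ?_⟩
        simp only [nLit, bA, decide_eq_false_iff_not]
        exact hc2
      by_cases hc3 : (i', b) ∈ DclQ Q v
      case neg =>
        refine ⟨nLit (.D v i' b), by simp [nLit], ?_⟩
        simp only [nLit, bA, decide_eq_false_iff_not]
        exact hc3
      have hax : axjQ F Q u = 0 := by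
        by_contra hax
        rw [VfQ, if_pos hax] at hc2
        omega
      have h3 := hRes u h1 h2 hax
      have hxv : i = (rwQ F Q u).2.2 := by rw [hc2, VfQ, if_neg (by simpa using hax)]
      have hvv : v = (rwQ F Q u).1 := by rw [hc1, RfQ, if_neg (by simpa using hax)]
      refine ⟨pLit (.D u i' b), by simp [pLit, nLit], ?_⟩
      simp only [pLit, bA, decide_eq_true_eq]
      apply h3.2.2.2.2.2.2.2
      apply Finset.mem_union_left
      apply Finset.mem_erase.mpr
      constructor
      · intro hcc
        apply hne'
        rw [hxv]
        exact congrArg Prod.fst hcc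
      · rw [← hvv]
        exact hc3
    -- A19
    · obtain ⟨hj1, hj2⟩ := Finset.mem_Icc.mp hj
      by_cases hc : j = axjQ F Q u
      case neg =>
        refine ⟨nLit (.I u j), by simp [nLit], ?_⟩
        simp only [nLit, bA, decide_eq_false_iff_not]
        exact hc
      have hax : axjQ F Q u ≠ 0 := by omega
      refine ⟨pLit (.D u i b), by simp [pLit, nLit], ?_⟩
      simp only [pLit, bA, decide_eq_true_eq]
      apply (hAx u hax).2
      rw [← hc]
      exact hib
    -- A20
    · obtain ⟨h1, h2⟩ := Finset.mem_Icc.mp hu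
      by_cases hm : (i, true) ∈ DclQ Q u
      · refine ⟨nLit (.D u i false), by simp [nLit], ?_⟩
        simp only [nLit, bA, decide_eq_false_iff_not]
        intro hf
        exact hNT u h1 h2 i ⟨hm, hf⟩
      · refine ⟨nLit (.D u i true), by simp [nLit], ?_⟩
        simp only [nLit, bA, decide_eq_false_iff_not]
        exact hm
    -- A21
    · refine ⟨nLit (.D s i b), Finset.mem_singleton_self _, ?_⟩
      simp only [nLit, bA, decide_eq_false_iff_not]
      rw [hlastD]
      exact Finset.notMem_empty _
  · -- A22
    obtain ⟨u, hu, v, hv, rfl⟩ := h22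
    exact ⟨pLit (.P v), by simp [pLit, nLit], by simp [bA, pLit]⟩
  · -- A23
    obtain ⟨u, hu, v, hv, rfl⟩ := h23
    exact ⟨pLit (.P v), by simp [pLit, nLit], by simp [bA, pLit]⟩
  · -- A24
    rw [h24]
    exact ⟨pLit (.P s), Finset.mem_singleton_self _, by simp [bA, pLit]⟩

end Aux13
/-! ## Statement 13 -/

/-- For every CNF `F` with `n` variables and `m` non-tautological clauses and every
integer `s ≥ 1`: `RREF(F,s)` is satisfiable iff `F` has a Resolution refutation of
length at most `s`. -/
theorem RREF_sat_iff_short_refutation (F : CNFFam) (hWF : F.WF) (s : ℕ) (hs : 1 ≤ s) :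
    CnfSat (RREF F s) ↔
      ∃ Prf : List (Clause ℕ), IsResRefutation F.clauseSet Prf ∧ Prf.length ≤ s := by
  constructor
  · rintro ⟨a, ha⟩
    exact Aux13.forward F hWF s hs a ha
  · rintro ⟨Prf, hPrf, hlen⟩
    have hF : ∀ C ∈ F.clauseSet, ∀ l ∈ C, l.1 ∈ Finset.Icc 1 F.n := by
      rintro C ⟨j, hj, rfl⟩ l hl
      exact (hWF.1 j hj).2 l hl
    obtain ⟨hG, hlen2⟩ := Aux13.normalize F.n F.clauseSet hF Prf hPrf
    obtain ⟨Q', hG', hlen'⟩ :=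
      Aux13.pad F.n F.clauseSet _ hG s (by rw [hlen2]; exact hlen)
    exact Aux13.backward F hWF s hs Q' hG' hlen'
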